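/- A complete set of representatives for the double cosets S_n \ G(r,d,n) / S_n is given by the elements (1,...,1, ξ,...,ξ, ..., ξ^{r-1},...,ξ^{r-1}, id) with multiplicities l_0, l_1, ..., l_{r-1}, where Σ_i l_i = n and Σ_i i·l_i ≡ 0 (mod d). In particular, distinct such r-tuples (l_0, ..., l_{r-1}) give distinct double cosets. -/

import Mathlib

open SemidirectProduct

/-- The permutation action of `S_n` on `C_r^n` by permuting coordinates. -/
def wreathAut (r n : ℕ) : Equiv.Perm (Fin n) →* MulAut (Fin n → Multiplicative (ZMod r)) where
  toFun σ := MulEquiv.arrowCongr σ (MulEquiv.refl _)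
  map_one' := by ext f i; rfl
  map_mul' σ τ := by ext f i; rfl

/-- The wreath product `G(r,1,n) = C_r ≀ S_n`. -/
abbrev Gr1n (r n : ℕ) := (Fin n → Multiplicative (ZMod r)) ⋊[wreathAut r n] Equiv.Perm (Fin n)

instance (r n : ℕ) [NeZero r] : Finite (Gr1n r n) :=
  Finite.of_injective (fun g => (g.left, g.right))
    (by intro a b h
        exact SemidirectProduct.ext (congrArg Prod.fst h) (congrArg Prod.snd h))

/-- The homomorphism `Φ : G(r,1,n) → C_d`, `(ξ₁,…,ξₙ,σ) ↦ (ξ₁⋯ξₙ)^{r/d}`,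
realised additively with values in `ZMod d`. -/
def PhiHom (r d n : ℕ) (h : d ∣ r) : Gr1n r n →* Multiplicative (ZMod d) where
  toFun g := Multiplicative.ofAdd (ZMod.castHom h (ZMod d) (∑ i, Multiplicative.toAdd (g.left i)))
  map_one' := by simp
  map_mul' g₁ g₂ := by
    have hl : (g₁ * g₂).left = g₁.left * wreathAut r n g₁.right g₂.left :=
      SemidirectProduct.mul_left g₁ g₂
    have hperm : (∑ i, Multiplicative.toAdd (wreathAut r n g₁.right g₂.left i))
        = ∑ i, Multiplicative.toAdd (g₂.left i) := by
      have := Equiv.sum_comp (g₁.right.symm) (fun i => Multiplicative.toAdd (g₂.left i))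
      simpa [wreathAut] using this
    simp [hl, Finset.sum_add_distrib, hperm, map_add]

/-- `S_n` as a subgroup of the wreath product. -/
def SnSub (r n : ℕ) : Subgroup (Gr1n r n) := (inr : Equiv.Perm (Fin n) →* Gr1n r n).range

open scoped Classical

/-- The count vector of an element of the wreath product: `counts g i` is the number of
coordinates of `g` equal to `ξ^i`. -/
def counts (r n : ℕ) (g : Gr1n r n) : ZMod r → ℕ := fun i =>
  (Finset.univ.filter (fun j => Multiplicative.toAdd (g.left j) = i)).card

/-- The fiber of `Sigma.fst` over `i` is `β i`. -/
def sigmaFstFiber {ι : Type*} (β : ι → Type*) (i : ι) :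
    {s : Σ j, β j // s.1 = i} ≃ β i where
  toFun x := x.2 ▸ x.1.2
  invFun b := ⟨⟨i, b⟩, rfl⟩
  left_inv := by rintro ⟨⟨j, b⟩, rfl⟩; rfl
  right_inv b := rfl

/-- A complete set of representatives of the double cosets
`S_n \ G(r,d,n) / S_n` is given by the elements `(1,…,1,ξ,…,ξ,…,ξ^{r-1},…,ξ^{r-1}, id)`
with multiplicities `l_0, …, l_{r-1}` satisfying `Σ l_i = n` and `Σ i·l_i ≡ 0 (mod d)`:
two elements of `G(r,d,n)` lie in the same double coset iff they have the same count
vector (so distinct tuples give distinct double cosets), and every such tuple `l` is the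
count vector of an element of `G(r,d,n)` of the form `(ξ_1, …, ξ_n, id)`. -/
theorem Grdn_double_coset_representatives (r d n : ℕ) [NeZero r] (h : d ∣ r) :
    (∀ g₁ ∈ (PhiHom r d n h).ker, ∀ g₂ ∈ (PhiHom r d n h).ker,
      ((∃ h₁ ∈ SnSub r n, ∃ h₂ ∈ SnSub r n, g₂ = h₁ * g₁ * h₂) ↔
        counts r n g₁ = counts r n g₂)) ∧
    (∀ l : ZMod r → ℕ, (∑ i, l i) = n → (∑ i : ZMod r, i.val * l i) % d = 0 →
      ∃ g ∈ (PhiHom r d n h).ker, g.right = 1 ∧ counts r n g = l) := by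
  constructor
  · intro g₁ _ g₂ _
    constructor
    · rintro ⟨h₁, ⟨σ, rfl⟩, h₂, ⟨τ, rfl⟩, rfl⟩
      have hleft : (inr σ * g₁ * inr (φ := wreathAut r n) τ).left
          = fun j => g₁.left (σ⁻¹ j) := by
        funext j
        simp only [mul_left, mul_right, left_inr, right_inr]
        simp [wreathAut, Equiv.Perm.inv_def]
      funext i
      show (Finset.univ.filter _).card = (Finset.univ.filter _).card
      rw [hleft]
      exact (Finset.card_equiv σ⁻¹ (by simp)).symm
    · intro hc
      -- build a permutation σ with g₁.left (σ j) = g₂.left j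
      have hcard : ∀ i : ZMod r,
          Fintype.card {j // Multiplicative.toAdd (g₂.left j) = i}
            = Fintype.card {j // Multiplicative.toAdd (g₁.left j) = i} := by
        intro i
        have := congrFun hc i
        simpa [counts, Fintype.card_subtype] using this.symm
      let fib : ∀ i : ZMod r,
          {j // Multiplicative.toAdd (g₂.left j) = i}
            ≃ {j // Multiplicative.toAdd (g₁.left j) = i} :=
        fun i => Fintype.equivOfCardEq (hcard i)
      let σ : Equiv.Perm (Fin n) :=
        ((Equiv.sigmaFiberEquiv (fun j => Multiplicative.toAdd (g₂.left j))).symm.trans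
          (Equiv.sigmaCongrRight fib)).trans
          (Equiv.sigmaFiberEquiv (fun j => Multiplicative.toAdd (g₁.left j)))
      have hσ : ∀ j, g₁.left (σ j) = g₂.left j := by
        intro j
        have : Multiplicative.toAdd (g₁.left (σ j))
            = Multiplicative.toAdd (g₂.left j) :=
          (fib (Multiplicative.toAdd (g₂.left j)) ⟨j, rfl⟩).2
        exact Multiplicative.toAdd.injective this
      refine ⟨inr σ⁻¹, ⟨σ⁻¹, rfl⟩, inr (g₁.right⁻¹ * σ * g₂.right),
        ⟨g₁.right⁻¹ * σ * g₂.right, rfl⟩, ?_⟩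
      refine SemidirectProduct.ext ?_ ?_
      · funext j
        simp only [mul_left, mul_right, left_inr, right_inr]
        simp only [mul_left, mul_right, left_inr, right_inr, wreathAut,
          MonoidHom.coe_mk, OneHom.coe_mk, MulEquiv.arrowCongr_apply, Pi.mul_apply,
          MulEquiv.refl_apply, map_one, Pi.one_apply, one_mul, mul_one,
          Equiv.Perm.inv_def, Equiv.symm_symm]
        exact (hσ j).symm
      · simp only [mul_right, right_inr]
        group
  · intro l hsum hmod
    have hcard : Fintype.card (Σ i : ZMod r, Fin (l i)) = Fintype.card (Fin n) := by
      simp [Fintype.card_sigma, hsum]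
    let e : Fin n ≃ Σ i : ZMod r, Fin (l i) := (Fintype.equivOfCardEq hcard).symm
    let f : Fin n → Multiplicative (ZMod r) := fun j => Multiplicative.ofAdd (e j).1
    refine ⟨inl f, ?_, by simp, ?_⟩
    · -- in the kernel
      have hs : (∑ j, Multiplicative.toAdd (f j)) = ∑ i : ZMod r, l i • i := by
        have h1 : (∑ j, Multiplicative.toAdd (f j)) = ∑ s : Σ i : ZMod r, Fin (l i), s.1 := by
          have := Equiv.sum_comp e (fun s : Σ i : ZMod r, Fin (l i) => s.1)
          simpa [f] using this
        rw [h1, ← Finset.univ_sigma_univ, Finset.sum_sigma]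
        simp
      obtain ⟨k, hk⟩ := Nat.dvd_of_mod_eq_zero hmod
      have hz : ((∑ i : ZMod r, i.val * l i : ℕ) : ZMod d) = 0 := by
        rw [hk]; push_cast; simp [ZMod.natCast_self]
      rw [MonoidHom.mem_ker]
      show Multiplicative.ofAdd (ZMod.castHom h (ZMod d) _) = 1
      rw [left_inl, hs]
      have : (ZMod.castHom h (ZMod d)) (∑ i : ZMod r, l i • i)
          = ((∑ i : ZMod r, i.val * l i : ℕ) : ZMod d) := by
        rw [map_sum]
        push_cast
        refine Finset.sum_congr rfl fun i _ => ?_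
        rw [map_nsmul, ZMod.castHom_apply, ← ZMod.natCast_val, nsmul_eq_mul, mul_comm]
      rw [this, hz]
      rfl
    · funext i
      show (Finset.univ.filter _).card = l i
      have h1 : (Finset.univ.filter fun j => Multiplicative.toAdd ((inl (φ := wreathAut r n) f).left j) = i)
          = Finset.univ.filter fun j => (e j).1 = i := by
        ext j
        rw [Finset.mem_filter, Finset.mem_filter]
        simp [f]
      rw [h1, ← Fintype.card_subtype]
      have e2 : {j // (e j).1 = i} ≃ Fin (l i) :=
        (Equiv.subtypeEquiv e (fun j => Iff.rfl)).trans (sigmaFstFiber _ i)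
      rw [Fintype.card_congr e2, Fintype.card_fin]
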